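/- arXiv:2401.06309 — 3 statements merged into one kernel-verified Lean document; each statement's English description precedes it below -/
import Mathlib

section
/- Let k1, k2, τ > 0 and suppose 2τ²k1 + 2τk2 - 1 > 0. Then δ* := τk1 + k2 - √(k2²+2k1) satisfies δ* < τk1, and for every δ with δ* ≤ δ < τk1, the function λ̃2(δ) = -k1²/(-τk1+δ)³ - k1k2/(-τk1+δ)² + k1/(2(-τk1+δ)) satisfies λ̃2(δ) ≥ 0. -/
theorem stmt_4 (k1 k2 τ : ℝ) (hk1 : 0 < k1) (hk2 : 0 < k2) (hτ : 0 < τ)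
    (hcond : 2*τ^2*k1 + 2*τ*k2 - 1 > 0) :
    (τ*k1 + k2 - Real.sqrt (k2^2 + 2*k1) < τ*k1) ∧
    ∀ δ : ℝ, τ*k1 + k2 - Real.sqrt (k2^2 + 2*k1) ≤ δ → δ < τ*k1 →
      -k1^2 / (-τ*k1 + δ)^3 - k1*k2 / (-τ*k1 + δ)^2 + k1 / (2*(-τ*k1 + δ)) ≥ 0 := by
  set s := Real.sqrt (k2^2 + 2*k1) with hsdef
  have hnn : (0:ℝ) ≤ k2^2 + 2*k1 := by positivity
  have hs2 : s^2 = k2^2 + 2*k1 := Real.sq_sqrt hnn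
  have hks : k2 < s := by
    nlinarith [Real.sqrt_nonneg (k2^2 + 2*k1), hs2]
  constructor
  · linarith
  · intro δ hlo hhi
    set x := -τ*k1 + δ with hxdef
    have hx0 : x < 0 := by rw [hxdef]; linarith
    have hxlo : k2 - s ≤ x := by rw [hxdef]; linarith
    have hquad : x^2 - 2*k2*x - 2*k1 ≤ 0 := by
      have h1 : (x - (k2 - s)) * (x - (k2 + s)) ≤ 0 :=
        mul_nonpos_of_nonneg_of_nonpos (by linarith) (by nlinarith)
      nlinarith [h1]
    have heq : -k1^2 / x^3 - k1*k2 / x^2 + k1 / (2*x)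
        = k1 * (x^2 - 2*k2*x - 2*k1) / (2*x^3) := by
      have hxne : x ≠ 0 := ne_of_lt hx0
      field_simp
      ring
    rw [heq]
    exact div_nonneg_iff.mpr (Or.inr ⟨by nlinarith, by nlinarith [pow_pos (neg_pos.mpr hx0) 3]⟩)
end

section
/- Let k1, k2, τ > 0 and δ1, δ2 with 1+δ1 > 0, 1+δ2 > 0. Then λ̂2(δ1, δ2) > λ2(0,0) if and only if θ(δ1, δ2) = 2δ1² - (τ²k1 + 2τk2 - 4)δ1 - 2τk2δ2 - 2τk2δ1δ2 > 0, where λ̂2(δ1,δ2) = -(k1(1+δ1)/(τk1)³)((τk1)²/2 + τk1k2(1+δ2) - k1(1+δ1)) and λ2(0,0) = -(k1/(τk1)³)((τk1)²/2 + τk1k2 - k1). -/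
theorem stmt_8 (k1 k2 τ δ1 δ2 : ℝ) (hk1 : 0 < k1) (hk2 : 0 < k2) (hτ : 0 < τ)
    (h1 : 1 + δ1 > 0) (h2 : 1 + δ2 > 0) :
    (-(k1*(1+δ1)/(τ*k1)^3) * ((τ*k1)^2/2 + τ*k1*k2*(1+δ2) - k1*(1+δ1)) >
     -(k1/(τ*k1)^3) * ((τ*k1)^2/2 + τ*k1*k2 - k1))
    ↔ (2*δ1^2 - (τ^2*k1 + 2*τ*k2 - 4)*δ1 - 2*τ*k2*δ2 - 2*τ*k2*δ1*δ2 > 0) := by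
  have hc : (0:ℝ) < (τ*k1)^3 := by positivity
  set A := (τ*k1)^2/2 + τ*k1*k2*(1+δ2) - k1*(1+δ1) with hA
  set B := (τ*k1)^2/2 + τ*k1*k2 - k1 with hB
  have key : (-(k1*(1+δ1)/(τ*k1)^3) * A > -(k1/(τ*k1)^3) * B)
      ↔ k1*B - k1*(1+δ1)*A > 0 := by
    rw [gt_iff_lt, ← sub_pos]
    have h : -(k1*(1+δ1)/(τ*k1)^3) * A - -(k1/(τ*k1)^3) * B
        = (k1*B - k1*(1+δ1)*A) / (τ*k1)^3 := by ring
    rw [h, gt_iff_lt, div_pos_iff]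
    constructor
    · rintro (⟨h', _⟩ | ⟨_, h''⟩)
      · exact h'
      · linarith
    · intro h'
      exact Or.inl ⟨h', hc⟩
  rw [key]
  have hpoly : k1*B - k1*(1+δ1)*A
      = k1^2/2 * (2*δ1^2 - (τ^2*k1 + 2*τ*k2 - 4)*δ1 - 2*τ*k2*δ2 - 2*τ*k2*δ1*δ2) := by
    rw [hA, hB]; ring
  rw [hpoly]
  constructor
  · intro h; nlinarith [sq_nonneg k1]
  · intro h; positivity
end

section
/- Let k1, k2, τ > 0 and suppose the unattacked OVRV model is string stable, i.e., λ2 < 0, equivalently τ²k1/2 + τk2 - 1 > 0. Then every Type I attack δ with δ* ≤ δ < τk1, where δ* = τk1 + k2 - √(k2²+2k1), satisfies λ̃2(δ) ≥ 0 > λ2; in particular, any attack destabilizing the dynamics also degrades stability (λ̃2 > λ2). -/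
lemma expr_eq (k1 k2 x : ℝ) (hx : x ≠ 0) :
    -k1^2 / x^3 - k1*k2 / x^2 + k1 / (2*x)
      = k1 * (x^2 - 2*k2*x - 2*k1) / (2*x^3) := by
  field_simp
  ring

theorem stmt_13 (k1 k2 τ : ℝ) (hk1 : 0 < k1) (hk2 : 0 < k2) (hτ : 0 < τ)
    (hstable : τ^2*k1/2 + τ*k2 - 1 > 0) :
    ∀ δ : ℝ, τ*k1 + k2 - Real.sqrt (k2^2 + 2*k1) ≤ δ → δ < τ*k1 →
      (-k1^2 / (-τ*k1 + δ)^3 - k1*k2 / (-τ*k1 + δ)^2 + k1 / (2*(-τ*k1 + δ)) ≥ 0) ∧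
      (0 > -k1^2 / (-τ*k1)^3 - k1*k2 / (-τ*k1)^2 + k1 / (2*(-τ*k1))) ∧
      (-k1^2 / (-τ*k1 + δ)^3 - k1*k2 / (-τ*k1 + δ)^2 + k1 / (2*(-τ*k1 + δ)) >
       -k1^2 / (-τ*k1)^3 - k1*k2 / (-τ*k1)^2 + k1 / (2*(-τ*k1))) := by
  intro δ hδl hδu
  have hs2 : (Real.sqrt (k2^2 + 2*k1))^2 = k2^2 + 2*k1 := Real.sq_sqrt (by nlinarith)
  have hs0 : 0 ≤ Real.sqrt (k2^2 + 2*k1) := Real.sqrt_nonneg _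
  set s := Real.sqrt (k2^2 + 2*k1) with hs
  set x : ℝ := -τ*k1 + δ with hxdef
  have hx0 : x < 0 := by rw [hxdef]; linarith
  have hxne : x ≠ 0 := ne_of_lt hx0
  have hx3 : x^3 < 0 := by
    have := mul_pos (mul_pos (neg_pos.mpr hx0) (neg_pos.mpr hx0)) (neg_pos.mpr hx0)
    nlinarith
  have hy0 : -τ*k1 < 0 := by nlinarith
  have hyne : (-τ*k1 : ℝ) ≠ 0 := ne_of_lt hy0
  have htk : 0 < τ*k1 := mul_pos hτ hk1
  have hy3 : (-τ*k1)^3 < 0 := by nlinarith [pow_pos htk 3]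
  -- quadratic bound for attacked case
  have hxk : x - k2 ≥ -s := by rw [hxdef]; linarith
  have hquad : x^2 - 2*k2*x - 2*k1 ≤ 0 := by
    have h1 : (x - k2)^2 ≤ s^2 := by
      have h2 : x - k2 ≤ s := by nlinarith
      nlinarith
    nlinarith
  have hA : -k1^2 / x^3 - k1*k2 / x^2 + k1 / (2*x) ≥ 0 := by
    rw [expr_eq k1 k2 x hxne]
    rw [ge_iff_le, div_nonneg_iff]
    right
    exact ⟨by nlinarith, by linarith⟩
  have hquad0 : (-τ*k1)^2 - 2*k2*(-τ*k1) - 2*k1 > 0 := by nlinarith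
  have hB : 0 > -k1^2 / (-τ*k1)^3 - k1*k2 / (-τ*k1)^2 + k1 / (2*(-τ*k1)) := by
    rw [expr_eq k1 k2 (-τ*k1) hyne]
    apply div_neg_of_pos_of_neg
    · nlinarith
    · linarith
  exact ⟨hA, hB, lt_of_lt_of_le hB hA⟩
end
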